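/- arXiv:1809.02692 — 2 statements merged into one kernel-verified Lean document; each statement's English description precedes it below -/
import Mathlib

section
/- Let G be a group with finite generating set S, Σ = S ∪ S⁻¹, and fix D ≥ 0. There exists m ∈ ℕ such that for any two geodesic words u and v over Σ, if u and v have the same m-tail (T_m(u) = T_m(v)) and the same m-local contracting type ({w : |w| ≤ m and uw ∈ L_D} = {w : |w| ≤ m and vw ∈ L_D}), then u and v have the same D-contracting cone: Cone^D(u) = Cone^D(v). -/
/-! Words over the alphabet `Σ = S ∪ S⁻¹` in a group `G` with finite generating
set `S`, word length, geodesic words, and `D`-contracting geodesic words. -/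

section Defs

variable {G : Type*} [Group G]

/-- `g` is a letter of the alphabet `Σ = S ∪ S⁻¹`. -/
def IsLetter (S : Finset G) (g : G) : Prop := g ∈ S ∨ g⁻¹ ∈ S

/-- The word length `|g|`: the minimum length of a list over `Σ = S ∪ S⁻¹`
whose product is `g`. -/
noncomputable def wordLength (S : Finset G) (g : G) : ℕ :=
  sInf {n | ∃ l : List G, (∀ x ∈ l, IsLetter S x) ∧ l.prod = g ∧ l.length = n}

/-- The word metric `d(g,h) = |g⁻¹h|`. -/
noncomputable def wordDist (S : Finset G) (g h : G) : ℕ := wordLength S (g⁻¹ * h)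

/-- A word (list of letters of `Σ`) is geodesic if the word length of its
product equals its length. -/
def IsGeodesicWord (S : Finset G) (w : List G) : Prop :=
  (∀ x ∈ w, IsLetter S x) ∧ wordLength S w.prod = w.length

/-- `P_{i,j}(w)`: the vertices `a₁⋯a_k` for `i ≤ k ≤ j` of the subsegment of
the path of prefix products of `w`. -/
def segVerts (w : List G) (i j : ℕ) : Set G :=
  {g | ∃ k, i ≤ k ∧ k ≤ j ∧ (w.take k).prod = g}

/-- The closed ball of radius `r` about `g₀` in the word metric. -/
def wordBall (S : Finset G) (g₀ : G) (r : ℕ) : Set G :=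
  {h | wordDist S g₀ h ≤ r}

/-- The projection `π_P(x)` of a point `x` to a subset `P` of `G`:
the points of `P` at minimal word-metric distance from `x`. -/
def projPt (S : Finset G) (P : Set G) (x : G) : Set G :=
  {p ∈ P | ∀ q ∈ P, wordDist S x p ≤ wordDist S x q}

/-- The projection `π_P(B) = ⋃_{x ∈ B} π_P(x)` of a set `B` to `P`. -/
def projSet (S : Finset G) (P B : Set G) : Set G :=
  ⋃ x ∈ B, projPt S P x

/-- A word `w` over `Σ` is a `D`-contracting geodesic word if it is geodesic
and, for every `0 ≤ i ≤ j ≤ |w|` and every ball `B` (in the word metric)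
disjoint from `P_{i,j}(w)`, the diameter of `π_{P_{i,j}(w)}(B)` in the word
metric is at most `D`. -/
def IsContractingWord (S : Finset G) (D : ℝ) (w : List G) : Prop :=
  IsGeodesicWord S w ∧
    ∀ i j : ℕ, i ≤ j → j ≤ w.length → ∀ g₀ : G, ∀ r : ℕ,
      Disjoint (wordBall S g₀ r) (segVerts w i j) →
        ∀ p ∈ projSet S (segVerts w i j) (wordBall S g₀ r),
          ∀ q ∈ projSet S (segVerts w i j) (wordBall S g₀ r),
            (wordDist S p q : ℝ) ≤ D

end Defs

section Cones

variable {G : Type*} [Group G]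

/-- The `D`-contracting cone of a word `u`: all words `w` over `Σ` such that
the concatenation `uw` is a `D`-contracting geodesic word. -/
def cone (S : Finset G) (D : ℝ) (u : List G) : Set (List G) :=
  {w | (∀ x ∈ w, IsLetter S x) ∧ IsContractingWord S D (u ++ w)}

/-- The `m`-tail of a word `u`: all `h ∈ G` with `|h| ≤ m` and `|ūh| < |ū|`. -/
def mTail (S : Finset G) (m : ℕ) (u : List G) : Set G :=
  {h | wordLength S h ≤ m ∧ wordLength S (u.prod * h) < wordLength S u.prod}

/-- The `m`-local contracting type of `u`: all words `w` over `Σ` with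
`|w| ≤ m` such that `uw` is a `D`-contracting geodesic word. -/
def localContractingType (S : Finset G) (D : ℝ) (m : ℕ) (u : List G) : Set (List G) :=
  {w | w.length ≤ m ∧ (∀ x ∈ w, IsLetter S x) ∧ IsContractingWord S D (u ++ w)}

end Cones

section Basic

variable {G : Type*} [Group G] (S : Finset G)

lemma IsLetter.inv {x : G} (h : IsLetter S x) : IsLetter S x⁻¹ := by
  rcases h with h | h
  · exact Or.inr (by simpa using h)
  · exact Or.inl h

/-- The set of candidate lengths for `g`. -/
def wlSet (g : G) : Set ℕ :=
  {n | ∃ l : List G, (∀ x ∈ l, IsLetter S x) ∧ l.prod = g ∧ l.length = n}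

lemma wordLength_eq_sInf (g : G) : wordLength S g = sInf (wlSet S g) := rfl

variable {S}

lemma exists_rep (hS : Subgroup.closure (S : Set G) = ⊤) (g : G) :
    ∃ l : List G, (∀ x ∈ l, IsLetter S x) ∧ l.prod = g := by
  have hg : g ∈ Subgroup.closure (S : Set G) := hS ▸ Subgroup.mem_top g
  induction hg using Subgroup.closure_induction with
  | mem x hx => exact ⟨[x], by simp only [List.mem_singleton, forall_eq]; exact Or.inl hx, by simp⟩
  | one => exact ⟨[], by simp, by simp⟩
  | mul x y _ _ hx hy =>
      obtain ⟨l1, hl1, hp1⟩ := hx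
      obtain ⟨l2, hl2, hp2⟩ := hy
      exact ⟨l1 ++ l2, by
        intro t ht; rcases List.mem_append.1 ht with h | h
        exacts [hl1 t h, hl2 t h], by simp [hp1, hp2]⟩
  | inv x _ hx =>
      obtain ⟨l, hl, hp⟩ := hx
      refine ⟨(l.map (·⁻¹)).reverse, ?_, ?_⟩
      · intro t ht
        simp only [List.mem_reverse, List.mem_map] at ht
        obtain ⟨s, hs, rfl⟩ := ht
        exact (hl s hs).inv
      · rw [← hp, List.prod_inv_reverse]

lemma wlSet_nonempty (hS : Subgroup.closure (S : Set G) = ⊤) (g : G) :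
    (wlSet S g).Nonempty := by
  obtain ⟨l, hl, hp⟩ := exists_rep hS g
  exact ⟨l.length, l, hl, hp, rfl⟩

lemma wordLength_le {g : G} {l : List G} (hl : ∀ x ∈ l, IsLetter S x) (hp : l.prod = g) :
    wordLength S g ≤ l.length :=
  Nat.sInf_le ⟨l, hl, hp, rfl⟩

lemma exists_geodesic_rep (hS : Subgroup.closure (S : Set G) = ⊤) (g : G) :
    ∃ l : List G, (∀ x ∈ l, IsLetter S x) ∧ l.prod = g ∧ l.length = wordLength S g :=
  Nat.sInf_mem (wlSet_nonempty hS g)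

@[simp] lemma wordLength_one : wordLength S (1 : G) = 0 :=
  Nat.le_zero.1 (wordLength_le (l := []) (by simp) (by simp))

lemma wordLength_eq_zero (hS : Subgroup.closure (S : Set G) = ⊤) {g : G}
    (h : wordLength S g = 0) : g = 1 := by
  obtain ⟨l, _, hp, hlen⟩ := exists_geodesic_rep hS g
  rw [h] at hlen
  rw [← hp, List.length_eq_zero_iff.1 hlen]; rfl

lemma wordLength_mul_le (hS : Subgroup.closure (S : Set G) = ⊤) (g h : G) :
    wordLength S (g * h) ≤ wordLength S g + wordLength S h := by
  obtain ⟨l1, h1, hp1, hn1⟩ := exists_geodesic_rep hS g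
  obtain ⟨l2, h2, hp2, hn2⟩ := exists_geodesic_rep hS h
  calc wordLength S (g * h) ≤ (l1 ++ l2).length := by
        refine wordLength_le ?_ (by simp [hp1, hp2])
        intro t ht; rcases List.mem_append.1 ht with h | h
        exacts [h1 t h, h2 t h]
    _ = _ := by simp [hn1, hn2]

lemma wordLength_inv_le (hS : Subgroup.closure (S : Set G) = ⊤) (g : G) :
    wordLength S g⁻¹ ≤ wordLength S g := by
  obtain ⟨l, hl, hp, hn⟩ := exists_geodesic_rep hS g
  calc wordLength S g⁻¹ ≤ ((l.map (·⁻¹)).reverse).length := by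
        refine wordLength_le ?_ ?_
        · intro t ht
          simp only [List.mem_reverse, List.mem_map] at ht
          obtain ⟨s, hs, rfl⟩ := ht
          exact (hl s hs).inv
        · rw [← hp, List.prod_inv_reverse]
    _ = l.length := by simp
    _ = _ := hn

lemma wordLength_inv (hS : Subgroup.closure (S : Set G) = ⊤) (g : G) :
    wordLength S g⁻¹ = wordLength S g := by
  refine le_antisymm (wordLength_inv_le hS g) ?_
  simpa using wordLength_inv_le hS g⁻¹

lemma wordLength_letter_le {x : G} (h : IsLetter S x) : wordLength S x ≤ 1 :=
  wordLength_le (l := [x]) (by simpa using h) (by simp)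

lemma wordLength_prod_le {l : List G} (hl : ∀ x ∈ l, IsLetter S x) :
    wordLength S l.prod ≤ l.length :=
  wordLength_le hl rfl

end Basic
section Dist

variable {G : Type*} [Group G] {S : Finset G}

lemma wordDist_def (g h : G) : wordDist S g h = wordLength S (g⁻¹ * h) := rfl

@[simp] lemma wordDist_self (g : G) : wordDist S g g = 0 := by
  simp [wordDist]

lemma wordDist_eq_zero (hS : Subgroup.closure (S : Set G) = ⊤) {g h : G}
    (h0 : wordDist S g h = 0) : g = h := by
  have := wordLength_eq_zero hS h0
  have : g * (g⁻¹ * h) = g * 1 := by rw [this]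
  simpa using this.symm

lemma wordDist_comm (hS : Subgroup.closure (S : Set G) = ⊤) (g h : G) :
    wordDist S g h = wordDist S h g := by
  unfold wordDist
  rw [← wordLength_inv hS (g⁻¹ * h)]
  simp

lemma wordDist_triangle (hS : Subgroup.closure (S : Set G) = ⊤) (g h k : G) :
    wordDist S g k ≤ wordDist S g h + wordDist S h k := by
  unfold wordDist
  have : g⁻¹ * k = (g⁻¹ * h) * (h⁻¹ * k) := by group
  rw [this]
  exact wordLength_mul_le hS _ _

@[simp] lemma wordDist_mul_left (g a b : G) :
    wordDist S (g * a) (g * b) = wordDist S a b := by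
  unfold wordDist
  congr 1
  group

lemma wordDist_one_right (g : G) : wordDist S 1 g = wordLength S g := by
  simp [wordDist]

lemma wordLength_le_add (hS : Subgroup.closure (S : Set G) = ⊤) (g h : G) :
    wordLength S h ≤ wordLength S g + wordDist S g h := by
  have : h = g * (g⁻¹ * h) := by group
  nth_rewrite 1 [this]
  exact wordLength_mul_le hS _ _

/-- reverse triangle: index comparison. -/
lemma le_wordDist_of_len (hS : Subgroup.closure (S : Set G) = ⊤) (g h : G) :
    wordLength S h ≤ wordLength S g + wordDist S g h ∧
    wordLength S g ≤ wordLength S h + wordDist S g h := by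
  refine ⟨wordLength_le_add hS g h, ?_⟩
  have := wordLength_le_add hS h g
  rwa [wordDist_comm hS h g] at this

end Dist
section Geod

variable {G : Type*} [Group G] {S : Finset G}

/-- the `k`-th vertex of the path of prefix products. -/
def wVtx (w : List G) (k : ℕ) : G := (w.take k).prod

lemma wVtx_zero (w : List G) : wVtx w 0 = 1 := rfl

lemma wVtx_length (w : List G) : wVtx w w.length = w.prod := by
  simp [wVtx]

lemma wVtx_mem_segVerts {w : List G} {i j k : ℕ} (h1 : i ≤ k) (h2 : k ≤ j) :
    wVtx w k ∈ segVerts w i j := ⟨k, h1, h2, rfl⟩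

variable (hS : Subgroup.closure (S : Set G) = ⊤)
include hS

lemma geodesic_prefix_len {w : List G} (hw : IsGeodesicWord S w) {k : ℕ}
    (hk : k ≤ w.length) : wordLength S (wVtx w k) = k := by
  obtain ⟨hlet, hlen⟩ := hw
  have h1 : wordLength S (wVtx w k) ≤ k := by
    have := wordLength_prod_le (l := w.take k) (fun x hx => hlet x (List.mem_of_mem_take hx))
    simpa [wVtx, List.length_take, Nat.min_eq_left hk] using this
  have h2 : w.length ≤ wordLength S (wVtx w k) + (w.length - k) := by
    have hd : wordLength S ((w.drop k).prod) ≤ w.length - k := by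
      have := wordLength_prod_le (l := w.drop k) (fun x hx => hlet x (List.mem_of_mem_drop hx))
      simpa using this
    calc w.length = wordLength S w.prod := hlen.symm
      _ = wordLength S ((w.take k).prod * (w.drop k).prod) := by
          rw [List.prod_take_mul_prod_drop]
      _ ≤ wordLength S (wVtx w k) + wordLength S ((w.drop k).prod) :=
          wordLength_mul_le hS _ _
      _ ≤ _ := by omega
  omega

lemma geodesic_vtx_dist {w : List G} (hw : IsGeodesicWord S w) {j k : ℕ}
    (hjk : j ≤ k) (hk : k ≤ w.length) :
    wordDist S (wVtx w j) (wVtx w k) = k - j := by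
  obtain ⟨hlet, hlen⟩ := hw
  set mid := (w.take k).drop j with hmid
  have hsplit : wVtx w k = wVtx w j * mid.prod := by
    rw [wVtx, wVtx, hmid]
    rw [← List.prod_append]
    congr 1
    conv_lhs => rw [← List.take_append_drop j (w.take k)]
    rw [List.take_take, Nat.min_eq_left hjk]
  have hd : wordDist S (wVtx w j) (wVtx w k) = wordLength S mid.prod := by
    rw [hsplit, wordDist_def]
    congr 1
    group
  have hmlen : mid.length = k - j := by
    simp [hmid, List.length_take, Nat.min_eq_left hk]
  have hmlet : ∀ x ∈ mid, IsLetter S x :=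
    fun x hx => hlet x (List.mem_of_mem_take (List.mem_of_mem_drop hx))
  have h1 : wordLength S mid.prod ≤ k - j := by
    simpa [hmlen] using wordLength_prod_le hmlet
  have h2 : k - j ≤ wordLength S mid.prod := by
    have hsplit2 : w.prod = (wVtx w j) * mid.prod * (w.drop k).prod := by
      rw [← hsplit, wVtx, List.prod_take_mul_prod_drop]
    have hj : wordLength S (wVtx w j) ≤ j := by
      have := geodesic_prefix_len hS ⟨hlet, hlen⟩ (le_trans hjk hk)
      omega
    have hdk : wordLength S ((w.drop k).prod) ≤ w.length - k := by
      have := wordLength_prod_le (l := w.drop k) (fun x hx => hlet x (List.mem_of_mem_drop hx))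
      simpa using this
    have : w.length ≤ j + wordLength S mid.prod + (w.length - k) := by
      calc w.length = wordLength S w.prod := hlen.symm
        _ = wordLength S ((wVtx w j) * mid.prod * (w.drop k).prod) := by rw [← hsplit2]
        _ ≤ wordLength S ((wVtx w j) * mid.prod) + wordLength S ((w.drop k).prod) :=
            wordLength_mul_le hS _ _
        _ ≤ wordLength S (wVtx w j) + wordLength S mid.prod
              + wordLength S ((w.drop k).prod) := by
            have := wordLength_mul_le hS (wVtx w j) mid.prod
            omega
        _ ≤ _ := by omega
    omega
  omega

lemma geodesic_of_append_left {x y : List G} (h : IsGeodesicWord S (x ++ y)) :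
    IsGeodesicWord S x := by
  obtain ⟨hlet, hlen⟩ := h
  have hx : ∀ t ∈ x, IsLetter S t := fun t ht => hlet t (List.mem_append_left y ht)
  refine ⟨hx, ?_⟩
  have h1 : wordLength S x.prod ≤ x.length := wordLength_prod_le hx
  have h2 : wordLength S y.prod ≤ y.length :=
    wordLength_prod_le (fun t ht => hlet t (List.mem_append_right x ht))
  have h3 : wordLength S (x.prod * y.prod) ≤ wordLength S x.prod + wordLength S y.prod :=
    wordLength_mul_le hS _ _
  rw [List.prod_append] at hlen
  simp only [List.length_append] at hlen
  omega

end Geod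
section Contr

variable {G : Type*} [Group G] (S : Finset G)

/-- Natural-number version of the contraction condition for a set `P`. -/
def ContrN (D' : ℕ) (P : Set G) : Prop :=
  ∀ g₀ : G, ∀ r : ℕ, Disjoint (wordBall S g₀ r) P →
    ∀ p ∈ projSet S P (wordBall S g₀ r), ∀ q ∈ projSet S P (wordBall S g₀ r),
      wordDist S p q ≤ D'

variable {S}

lemma isContractingWord_iff {D : ℝ} (hD : 0 ≤ D) (w : List G) :
    IsContractingWord S D w ↔ IsGeodesicWord S w ∧
      ∀ i j : ℕ, i ≤ j → j ≤ w.length → ContrN S ⌊D⌋₊ (segVerts w i j) := by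
  unfold IsContractingWord ContrN
  constructor
  · rintro ⟨hg, hc⟩
    refine ⟨hg, fun i j hij hj g₀ r hd p hp q hq => ?_⟩
    exact (Nat.le_floor_iff hD).2 (hc i j hij hj g₀ r hd p hp q hq)
  · rintro ⟨hg, hc⟩
    refine ⟨hg, fun i j hij hj g₀ r hd p hp q hq => ?_⟩
    have := hc i j hij hj g₀ r hd p hp q hq
    calc (wordDist S p q : ℝ) ≤ (⌊D⌋₊ : ℝ) := by exact_mod_cast this
      _ ≤ D := Nat.floor_le hD

lemma segVerts_append_left {x y : List G} {i j : ℕ} (hj : j ≤ x.length) :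
    segVerts (x ++ y) i j = segVerts x i j := by
  unfold segVerts
  ext g
  constructor <;> rintro ⟨k, h1, h2, h3⟩ <;> refine ⟨k, h1, h2, ?_⟩ <;>
    rw [← h3] <;> congr 1
  · exact (List.take_append_of_le_length (le_trans h2 hj)).symm
  · exact List.take_append_of_le_length (le_trans h2 hj)

lemma isContractingWord_of_append (hS : Subgroup.closure (S : Set G) = ⊤)
    {D : ℝ} (hD : 0 ≤ D) {x y : List G}
    (h : IsContractingWord S D (x ++ y)) : IsContractingWord S D x := by
  rw [isContractingWord_iff hD] at h ⊢
  obtain ⟨hg, hc⟩ := h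
  refine ⟨geodesic_of_append_left hS hg, fun i j hij hj => ?_⟩
  have := hc i j hij (le_trans hj (by simp))
  rwa [segVerts_append_left hj] at this

/-- membership facts for projections -/
lemma projPt_subset {P : Set G} {x p : G} (hp : p ∈ projPt S P x) : p ∈ P := hp.1

lemma projPt_min {P : Set G} {x p : G} (hp : p ∈ projPt S P x) :
    ∀ q ∈ P, wordDist S x p ≤ wordDist S x q := hp.2

lemma projPt_nonempty {P : Set G} (hP : P.Nonempty) (x : G) :
    (projPt S P x).Nonempty := by
  obtain ⟨p0, hp0⟩ := hP
  have hne : {n : ℕ | ∃ p ∈ P, wordDist S x p = n}.Nonempty := ⟨_, p0, hp0, rfl⟩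
  obtain ⟨p, hpP, hpd⟩ := Nat.sInf_mem hne
  refine ⟨p, hpP, fun q hq => ?_⟩
  rw [hpd]
  exact Nat.sInf_le ⟨q, hq, rfl⟩

lemma projPt_mono {P A : Set G} {x p : G} (hAP : A ⊆ P) (hpA : p ∈ A)
    (hp : p ∈ projPt S P x) : p ∈ projPt S A x :=
  ⟨hpA, fun q hq => hp.2 q (hAP hq)⟩

lemma mem_projSet {P B : Set G} {x p : G} (hx : x ∈ B) (hp : p ∈ projPt S P x) :
    p ∈ projSet S P B :=
  Set.mem_biUnion hx hp

lemma mem_wordBall_self (g₀ : G) (r : ℕ) : g₀ ∈ wordBall S g₀ r := by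
  simp [wordBall]

/-- ContrN is invariant under left translation. -/
lemma ContrN.translate {D' : ℕ} {P : Set G} (h : ContrN S D' P) (g : G) :
    ContrN S D' ((g * ·) '' P) := by
  have hball : ∀ g₀ r, wordBall S (g * g₀) r = (g * ·) '' wordBall S g₀ r := by
    intro g₀ r
    ext h'
    constructor
    · intro hh
      refine ⟨g⁻¹ * h', ?_, by group⟩
      simp only [wordBall, Set.mem_setOf_eq] at hh ⊢
      rw [wordDist_def] at hh ⊢
      convert hh using 2
      group
    · rintro ⟨t, ht, rfl⟩
      simpa [wordBall] using ht
  have hproj : ∀ x p, p ∈ projPt S ((g * ·) '' P) (g * x) ↔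
      ∃ p', p' ∈ projPt S P x ∧ p = g * p' := by
    intro x p
    constructor
    · rintro ⟨⟨p', hp', rfl⟩, hmin⟩
      refine ⟨p', ⟨hp', fun q hq => ?_⟩, rfl⟩
      have := hmin (g * q) ⟨q, hq, rfl⟩
      simpa using this
    · rintro ⟨p', ⟨hp', hmin⟩, rfl⟩
      refine ⟨⟨p', hp', rfl⟩, ?_⟩
      rintro q ⟨q', hq', rfl⟩
      simpa using hmin q' hq'
  intro g₀ r hd p hp q hq
  -- translate everything back by g⁻¹
  have hg₀ : g₀ = g * (g⁻¹ * g₀) := by group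
  rw [hg₀, hball] at hd hp hq
  have hd' : Disjoint (wordBall S (g⁻¹ * g₀) r) P := by
    rw [Set.disjoint_left] at hd ⊢
    intro a ha haP
    exact hd ⟨a, ha, rfl⟩ ⟨a, haP, rfl⟩
  obtain ⟨x, hx, hpx⟩ := Set.mem_iUnion₂.1 hp
  obtain ⟨y, hy, hqy⟩ := Set.mem_iUnion₂.1 hq
  obtain ⟨x', hx', rfl⟩ := hx
  obtain ⟨y', hy', rfl⟩ := hy
  obtain ⟨p', hp', rfl⟩ := (hproj x' p).1 hpx
  obtain ⟨q', hq', rfl⟩ := (hproj y' q).1 hqy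
  have := h (g⁻¹ * g₀) r hd' p' (mem_projSet hx' hp') q' (mem_projSet hy' hq')
  simpa using this

/-- vertices of an appended word, past the first part, are a translate. -/
lemma segVerts_append_right {v t : List G} {i j : ℕ} (hi : v.length ≤ i) (hj : v.length ≤ j) :
    segVerts (v ++ t) i j = (v.prod * ·) '' segVerts t (i - v.length) (j - v.length) := by
  unfold segVerts
  ext g
  constructor
  · rintro ⟨k, h1, h2, rfl⟩
    refine ⟨(t.take (k - v.length)).prod, ⟨k - v.length, by omega, by omega, rfl⟩, ?_⟩
    have hv : (v ++ t).take k = v ++ t.take (k - v.length) := by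
      rw [List.take_append,
        List.take_of_length_le (le_trans hi h1 : v.length ≤ k)]
    rw [hv, List.prod_append]
  · rintro ⟨x, ⟨k, h1, h2, rfl⟩, rfl⟩
    refine ⟨k + v.length, by omega, by omega, ?_⟩
    have hv : (v ++ t).take (k + v.length) = v ++ t.take k := by
      rw [List.take_append,
        List.take_of_length_le (by omega : v.length ≤ k + v.length)]
      congr 2
      omega
    rw [hv, List.prod_append]
end Contr
section Morse

variable {G : Type*} [Group G] (S : Finset G)

/-- distance from a point to a set -/
noncomputable def dP (P : Set G) (x : G) : ℕ := sInf {n | ∃ p ∈ P, wordDist S x p = n}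

variable {S}

lemma dP_le {P : Set G} {p : G} (x : G) (hp : p ∈ P) : dP S P x ≤ wordDist S x p :=
  Nat.sInf_le ⟨p, hp, rfl⟩

lemma dP_exists {P : Set G} (hP : P.Nonempty) (x : G) :
    ∃ p ∈ P, wordDist S x p = dP S P x := by
  obtain ⟨p0, hp0⟩ := hP
  have hne : {n | ∃ p ∈ P, wordDist S x p = n}.Nonempty := ⟨wordDist S x p0, p0, hp0, rfl⟩
  exact Nat.sInf_mem hne

lemma dP_lipschitz (hS : Subgroup.closure (S : Set G) = ⊤) {P : Set G} (hP : P.Nonempty)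
    (x y : G) : dP S P y ≤ wordDist S y x + dP S P x := by
  obtain ⟨p, hp, hd⟩ := dP_exists hP x
  calc dP S P y ≤ wordDist S y p := dP_le y hp
    _ ≤ wordDist S y x + wordDist S x p := wordDist_triangle hS y x p
    _ = _ := by rw [hd]

lemma ball_disjoint_of_lt_dP {P : Set G} {x : G} {r : ℕ} (h : r < dP S P x) :
    Disjoint (wordBall S x r) P := by
  rw [Set.disjoint_left]
  intro a ha haP
  have h1 : dP S P x ≤ wordDist S x a := dP_le x haP
  have h2 : wordDist S x a ≤ r := ha
  omega

lemma projPt_dist {P : Set G} (hP : P.Nonempty) {x p : G} (hp : p ∈ projPt S P x) :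
    wordDist S x p = dP S P x := by
  obtain ⟨p', hp', hd⟩ := dP_exists (S := S) hP x
  have h1 := dP_le (S := S) x hp.1
  have h2 := hp.2 p' hp'
  omega

lemma mem_projPt_of_realizer {P : Set G} {x p : G} (hp : p ∈ P)
    (hd : wordDist S x p = dP S P x) : p ∈ projPt S P x :=
  ⟨hp, fun q hq => by rw [hd]; exact dP_le x hq⟩

variable (hS : Subgroup.closure (S : Set G) = ⊤)
include hS

/-- chaining windows along a geodesic staying `θ`-far from a contracting set -/
lemma chain_windows {D' : ℕ} {P : Set G} (hP : P.Nonempty) (hcontr : ContrN S D' P)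
    {z : List G} (hz : IsGeodesicWord S z) {θ : ℕ} (hθ : 2 ≤ θ) :
    ∀ N a b, a ≤ b → b ≤ z.length → b - a ≤ N * (θ - 1) →
      (∀ s, a ≤ s → s ≤ b → θ ≤ dP S P (wVtx z s)) →
      ∀ p ∈ projPt S P (wVtx z a), ∀ q ∈ projPt S P (wVtx z b),
        wordDist S p q ≤ (N + 1) * D' := by
  intro N
  induction N with
  | zero =>
    intro a b hab hb h0 hfar p hp q hq
    have hba : b = a := by omega
    subst hba
    set x := wVtx z b
    have hd : dP S P x ≥ θ := hfar b le_rfl le_rfl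
    have hdisj : Disjoint (wordBall S x (dP S P x - 1)) P :=
      ball_disjoint_of_lt_dP (by omega)
    have hxball : x ∈ wordBall S x (dP S P x - 1) := mem_wordBall_self x _
    have := hcontr x (dP S P x - 1) hdisj p (mem_projSet hxball hp) q (mem_projSet hxball hq)
    omega
  | succ N ih =>
    intro a b hab hb hlen hfar p hp q hq
    set a' := min (a + (θ - 1)) b with ha'
    have ha'b : a' ≤ b := min_le_right _ _
    have haa' : a ≤ a' := by omega
    obtain ⟨q', hq'⟩ := projPt_nonempty hP (wVtx z a')
    -- window at a
    have hda : θ ≤ dP S P (wVtx z a) := hfar a le_rfl hab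
    have hdisj : Disjoint (wordBall S (wVtx z a) (dP S P (wVtx z a) - 1)) P :=
      ball_disjoint_of_lt_dP (by omega)
    have hmem1 : wVtx z a ∈ wordBall S (wVtx z a) (dP S P (wVtx z a) - 1) :=
      mem_wordBall_self _ _
    have hmem2 : wVtx z a' ∈ wordBall S (wVtx z a) (dP S P (wVtx z a) - 1) := by
      have : wordDist S (wVtx z a) (wVtx z a') = a' - a :=
        geodesic_vtx_dist hS hz haa' (le_trans ha'b hb)
      have h2 : a' - a ≤ θ - 1 := by omega
      simp only [wordBall, Set.mem_setOf_eq, this]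
      omega
    have step1 : wordDist S p q' ≤ D' :=
      hcontr _ _ hdisj p (mem_projSet hmem1 hp) q' (mem_projSet hmem2 hq')
    have hsub : b - a' ≤ N * (θ - 1) := by
      rcases le_or_gt (a + (θ - 1)) b with h | h
      · have he : a' = a + (θ - 1) := min_eq_left h
        have hm : (N + 1) * (θ - 1) = N * (θ - 1) + (θ - 1) := Nat.succ_mul N (θ - 1)
        omega
      · have he : a' = b := min_eq_right (le_of_lt h)
        omega
    have step2 : wordDist S q' q ≤ (N + 1) * D' :=
      ih a' b ha'b hb hsub (fun s hs1 hs2 => hfar s (le_trans haa' hs1) hs2) q' hq' q hq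
    calc wordDist S p q ≤ wordDist S p q' + wordDist S q' q := wordDist_triangle hS _ _ _
      _ ≤ D' + (N + 1) * D' := by omega
      _ = (N + 1 + 1) * D' := by ring

lemma morse_bound {D' : ℕ} {P : Set G} (hP : P.Nonempty) (hcontr : ContrN S D' P)
    {z : List G} (hz : IsGeodesicWord S z)
    (h0 : dP S P (wVtx z 0) = 0) (hend : dP S P (wVtx z z.length) ≤ 1) :
    ∀ t, t ≤ z.length → dP S P (wVtx z t) ≤ 14 * D' + 25 := by
  intro t ht
  by_contra hK
  push_neg at hK
  set θ := 2 * D' + 5 with hθdef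
  set K := 14 * D' + 25 with hKdef
  -- greatest index ≤ t with dP ≤ θ - 1
  have hAne : ({s | s ≤ t ∧ dP S P (wVtx z s) ≤ θ - 1} : Set ℕ).Nonempty :=
    ⟨0, Nat.zero_le t, by omega⟩
  have hAbdd : BddAbove {s | s ≤ t ∧ dP S P (wVtx z s) ≤ θ - 1} :=
    ⟨t, fun s hs => hs.1⟩
  set a₀ := sSup {s | s ≤ t ∧ dP S P (wVtx z s) ≤ θ - 1} with ha₀def
  have ha₀ : a₀ ≤ t ∧ dP S P (wVtx z a₀) ≤ θ - 1 := Nat.sSup_mem hAne hAbdd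
  have ha₀max : ∀ s, s ≤ t → dP S P (wVtx z s) ≤ θ - 1 → s ≤ a₀ :=
    fun s h1 h2 => le_csSup hAbdd ⟨h1, h2⟩
  -- least index ≥ t with dP ≤ θ - 1
  have hBne : ({s | t ≤ s ∧ dP S P (wVtx z s) ≤ θ - 1} : Set ℕ).Nonempty :=
    ⟨z.length, ht, by omega⟩
  set b₀ := sInf {s | t ≤ s ∧ dP S P (wVtx z s) ≤ θ - 1} with hb₀def
  have hb₀ : t ≤ b₀ ∧ dP S P (wVtx z b₀) ≤ θ - 1 := Nat.sInf_mem hBne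
  have hb₀le : b₀ ≤ z.length := Nat.sInf_le ⟨ht, by omega⟩
  have hb₀min : ∀ s, t ≤ s → dP S P (wVtx z s) ≤ θ - 1 → b₀ ≤ s :=
    fun s h1 h2 => Nat.sInf_le ⟨h1, h2⟩
  have ha₀t : a₀ < t := by
    rcases Nat.lt_or_ge a₀ t with h | h
    · exact h
    · exfalso; have : a₀ = t := by omega
      rw [this] at ha₀; omega
  have htb₀ : t < b₀ := by
    rcases Nat.lt_or_ge t b₀ with h | h
    · exact h
    · exfalso; have : b₀ = t := by omega
      rw [this] at hb₀; omega
  set a := a₀ + 1 with hadef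
  set b := b₀ - 1 with hbdef
  have hat : a ≤ t := ha₀t
  have htb : t ≤ b := by omega
  have hblen : b ≤ z.length := by omega
  have hfar : ∀ s, a ≤ s → s ≤ b → θ ≤ dP S P (wVtx z s) := by
    intro s h1 h2
    by_contra hc
    push_neg at hc
    have hc' : dP S P (wVtx z s) ≤ θ - 1 := by omega
    rcases le_or_gt s t with h | h
    · have := ha₀max s h hc'; omega
    · have := hb₀min s (le_of_lt h) hc'; omega
  have hda : dP S P (wVtx z a) ≤ θ := by
    have hlip := dP_lipschitz hS hP (wVtx z a₀) (wVtx z a)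
    have hd1 : wordDist S (wVtx z a) (wVtx z a₀) = 1 := by
      rw [wordDist_comm hS]
      have := geodesic_vtx_dist hS hz (show a₀ ≤ a by omega) (le_trans hat ht)
      omega
    omega
  have hdb : dP S P (wVtx z b) ≤ θ := by
    have hlip := dP_lipschitz hS hP (wVtx z b₀) (wVtx z b)
    have hd1 : wordDist S (wVtx z b) (wVtx z b₀) = 1 := by
      have := geodesic_vtx_dist hS hz (show b ≤ b₀ by omega) hb₀le
      omega
    omega
  set Λ := b - a with hΛdef
  set N := Λ / (θ - 1) + 1 with hNdef
  have hΛN : Λ ≤ N * (θ - 1) := by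
    have hmod := Nat.div_add_mod Λ (θ - 1)
    have hmlt : Λ % (θ - 1) < θ - 1 := Nat.mod_lt _ (by omega)
    have : N * (θ - 1) = (θ - 1) * (Λ / (θ - 1)) + (θ - 1) := by ring
    omega
  obtain ⟨pa, hpa⟩ := projPt_nonempty hP (wVtx z a)
  obtain ⟨pb, hpb⟩ := projPt_nonempty hP (wVtx z b)
  have hchain : wordDist S pa pb ≤ (N + 1) * D' :=
    chain_windows hS hP hcontr hz (by omega) N a b (by omega) hblen hΛN hfar pa hpa pb hpb
  have hroute : Λ ≤ θ + (N + 1) * D' + θ := by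
    have hab : wordDist S (wVtx z a) (wVtx z b) = Λ :=
      geodesic_vtx_dist hS hz (by omega) hblen
    have t1 : wordDist S (wVtx z a) (wVtx z b) ≤
        wordDist S (wVtx z a) pa + wordDist S pa (wVtx z b) := wordDist_triangle hS _ _ _
    have t2 : wordDist S pa (wVtx z b) ≤ wordDist S pa pb + wordDist S pb (wVtx z b) :=
      wordDist_triangle hS _ _ _
    have e1 : wordDist S (wVtx z a) pa = dP S P (wVtx z a) := projPt_dist hP hpa
    have e2 : wordDist S pb (wVtx z b) = dP S P (wVtx z b) := by
      rw [wordDist_comm hS]; exact projPt_dist hP hpb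
    omega
  -- arithmetic contradiction
  have hX : 2 * ((Λ / (θ - 1)) * D') ≤ Λ := by
    have h1 : (Λ / (θ - 1)) * (2 * D') ≤ (Λ / (θ - 1)) * (θ - 1) :=
      Nat.mul_le_mul_left _ (by omega)
    have h2 : (Λ / (θ - 1)) * (θ - 1) ≤ Λ := Nat.div_mul_le_self Λ (θ - 1)
    calc 2 * ((Λ / (θ - 1)) * D') = (Λ / (θ - 1)) * (2 * D') := by ring
      _ ≤ Λ := le_trans h1 h2
  have hNP : (N + 1) * D' = (Λ / (θ - 1)) * D' + 2 * D' := by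
    rw [hNdef]; ring
  have hΛbound : Λ ≤ 4 * θ + 4 * D' := by omega
  have hfinal : dP S P (wVtx z t) ≤ K := by
    have hlip := dP_lipschitz hS hP (wVtx z a) (wVtx z t)
    have hd1 : wordDist S (wVtx z t) (wVtx z a) = t - a := by
      rw [wordDist_comm hS]
      exact geodesic_vtx_dist hS hz hat ht
    have : t - a ≤ Λ := by omega
    omega
  omega

end Morse
section Cross

variable {G : Type*} [Group G] {S : Finset G}

lemma segVerts_mono {w : List G} {i j i' j' : ℕ} (h1 : i' ≤ i) (h2 : j ≤ j') :
    segVerts w i j ⊆ segVerts w i' j' := by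
  rintro g ⟨k, hk1, hk2, rfl⟩
  exact ⟨k, le_trans h1 hk1, le_trans hk2 h2, rfl⟩

variable (hS : Subgroup.closure (S : Set G) = ⊤)
include hS

lemma cross_impossible {D' : ℕ} {W : List G} (hW : IsGeodesicWord S W)
    {i nv n : ℕ} (hi : i < nv) (hnv : nv ≤ n) (hlen : W.length = n + 1)
    (hbig : 2 * D' + 2 ≤ n - nv)
    (hA : ContrN S D' (segVerts W i n))
    {g₀ : G} {r : ℕ} (hdisj : Disjoint (wordBall S g₀ r) (segVerts W i (n + 1)))
    {x y p q : G} (hx : x ∈ wordBall S g₀ r) (hy : y ∈ wordBall S g₀ r)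
    (hp : p ∈ projPt S (segVerts W i (n + 1)) x)
    (hq : q ∈ projPt S (segVerts W i (n + 1)) y)
    (hpA : p ∈ segVerts W i n) (hpC : p ∉ segVerts W nv (n + 1))
    (hqC : q ∈ segVerts W nv (n + 1)) (hqA : q ∉ segVerts W i n) :
    False := by
  set A := segVerts W i n with hAdef
  set P' := segVerts W i (n + 1) with hPdef
  have hAsubP : A ⊆ P' := segVerts_mono le_rfl (by omega)
  -- q is the endpoint
  obtain ⟨kq, hkq1, hkq2, hq_eq⟩ := hqC
  have hkq : kq = n + 1 := by
    by_contra hne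
    exact hqA ⟨kq, by omega, by omega, hq_eq⟩
  subst hkq
  -- p is an early vertex
  obtain ⟨kp, hkp1, hkp2, hp_eq⟩ := hpA
  have hkp : kp < nv := by
    by_contra hge
    push_neg at hge
    exact hpC ⟨kp, hge, by omega, hp_eq⟩
  set e := wVtx W (n + 1) with hedef
  set s' := wVtx W n with hs'def
  have hqe : q = e := hq_eq.symm
  have heP : e ∈ P' := wVtx_mem_segVerts (by omega) le_rfl
  have hs'A : s' ∈ A := wVtx_mem_segVerts (by omega) le_rfl
  -- lower bound on d(p, e)
  have hpe_lower : wordDist S p e = n + 1 - kp := by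
    rw [← hp_eq, hedef]
    exact geodesic_vtx_dist hS hW (by omega) (by omega)
  -- projections of the original ball to A
  have hdA : Disjoint (wordBall S g₀ r) A := hdisj.mono_right hAsubP
  have hAne : A.Nonempty := ⟨wVtx W i, wVtx_mem_segVerts le_rfl (by omega)⟩
  obtain ⟨astar, hastar⟩ := projPt_nonempty hAne y
  have h1 : wordDist S p astar ≤ D' := by
    refine hA g₀ r hdA p ?_ astar ?_
    · exact mem_projSet hx (projPt_mono hAsubP (hp_eq ▸ wVtx_mem_segVerts hkp1 hkp2) hp)
    · exact mem_projSet hy hastar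
  -- the ball around y of radius d(y,e) - 1
  have hyP : y ∉ P' := fun hyP => (Set.disjoint_left.1 hdisj) hy hyP
  have hye : 1 ≤ wordDist S y e := by
    by_contra hc
    push_neg at hc
    have : wordDist S y e = 0 := by omega
    exact hyP ((wordDist_eq_zero hS this) ▸ heP)
  have hminP : ∀ pt ∈ P', wordDist S y e ≤ wordDist S y pt := by
    intro pt hpt
    have := hq.2 pt hpt
    rwa [hqe] at this
  have hdBy : Disjoint (wordBall S y (wordDist S y e - 1)) A := by
    rw [Set.disjoint_left]
    intro a' ha' ha'A
    have h2 := hminP a' (hAsubP ha'A)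
    have h3 : wordDist S y a' ≤ wordDist S y e - 1 := ha'
    omega
  -- the point z₁ at distance 1 before e on a geodesic from y to e
  obtain ⟨zl, hzl_let, hzl_prod, hzl_len⟩ := exists_geodesic_rep hS (y⁻¹ * e)
  have hzl_geod : IsGeodesicWord S zl := ⟨hzl_let, by rw [hzl_prod, hzl_len]⟩
  have hlam : zl.length = wordDist S y e := by rw [hzl_len]; rfl
  set lam := zl.length with hlamdef
  set z₁ := y * wVtx zl (lam - 1) with hz₁def
  have hyz₁ : wordDist S y z₁ = lam - 1 := by
    rw [hz₁def, wordDist_def]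
    have : y⁻¹ * (y * wVtx zl (lam - 1)) = wVtx zl (lam - 1) := by group
    rw [this]
    exact geodesic_prefix_len hS hzl_geod (by omega)
  have hz₁By : z₁ ∈ wordBall S y (wordDist S y e - 1) := by
    simp only [wordBall, Set.mem_setOf_eq, hyz₁]
    omega
  have hyBy : y ∈ wordBall S y (wordDist S y e - 1) := mem_wordBall_self _ _
  have hz₁e : wordDist S z₁ e ≤ 1 := by
    have he_eq : e = y * wVtx zl lam := by
      rw [wVtx_length, hzl_prod]; group
    rw [hz₁def, he_eq, wordDist_mul_left]
    have := geodesic_vtx_dist hS hzl_geod (show lam - 1 ≤ lam by omega) le_rfl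
    omega
  have hs'e : wordDist S s' e ≤ 1 := by
    have h := geodesic_vtx_dist hS hW (show n ≤ n + 1 by omega) (by omega)
    rw [hs'def, hedef]
    omega
  have hz₁s' : wordDist S z₁ s' ≤ 2 := by
    have t1 := wordDist_triangle hS z₁ e s'
    have t2 : wordDist S e s' = wordDist S s' e := wordDist_comm hS e s'
    omega
  obtain ⟨a₁, ha₁⟩ := projPt_nonempty hAne z₁
  have h2 : wordDist S z₁ a₁ ≤ 2 := le_trans (ha₁.2 s' hs'A) hz₁s'
  have h3 : wordDist S astar a₁ ≤ D' := by
    refine hA y (wordDist S y e - 1) hdBy astar ?_ a₁ ?_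
    · exact mem_projSet hyBy hastar
    · exact mem_projSet hz₁By ha₁
  -- total
  have htot : wordDist S p e ≤ 2 * D' + 3 := by
    have t1 := wordDist_triangle hS p astar e
    have t2 := wordDist_triangle hS astar a₁ e
    have t3 := wordDist_triangle hS a₁ z₁ e
    have t4 : wordDist S a₁ z₁ = wordDist S z₁ a₁ := wordDist_comm hS _ _
    omega
  omega

end Cross
section MainLemma

variable {G : Type*} [Group G] {S : Finset G}

lemma mTail_nil (S : Finset G) (m : ℕ) : mTail S m ([] : List G) = ∅ := by
  ext h
  simp only [mTail, List.prod_nil, one_mul, Set.mem_setOf_eq, Set.mem_empty_iff_false,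
    iff_false, not_and]
  intro _
  simp

variable (hS : Subgroup.closure (S : Set G) = ⊤)
include hS

lemma mTail_nonempty {u : List G} (hu : IsGeodesicWord S u) (hu0 : u ≠ []) {m : ℕ}
    (hm : 1 ≤ m) : (mTail S m u).Nonempty := by
  have hne : 0 < u.length := List.length_pos_iff.2 hu0
  refine ⟨u.prod⁻¹ * wVtx u (u.length - 1), ?_, ?_⟩
  · show wordLength S (u.prod⁻¹ * wVtx u (u.length - 1)) ≤ m
    have heq : wordLength S (u.prod⁻¹ * wVtx u (u.length - 1))
        = wordDist S u.prod (wVtx u (u.length - 1)) := rfl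
    rw [heq, wordDist_comm hS]
    have h1 : wordDist S (wVtx u (u.length - 1)) (wVtx u u.length) = 1 := by
      have := geodesic_vtx_dist hS hu (show u.length - 1 ≤ u.length by omega) le_rfl
      omega
    rw [wVtx_length] at h1
    omega
  · show wordLength S (u.prod * (u.prod⁻¹ * wVtx u (u.length - 1))) < wordLength S u.prod
    have heq : u.prod * (u.prod⁻¹ * wVtx u (u.length - 1)) = wVtx u (u.length - 1) := by
      group
    rw [heq, geodesic_prefix_len hS hu (by omega), hu.2]
    omega

lemma cone_subset {D : ℝ} (hD : 0 ≤ D) {u v : List G}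
    (hu : IsGeodesicWord S u) (hv : IsGeodesicWord S v) (hu0 : u ≠ []) (hv0 : v ≠ [])
    (ht : mTail S (28 * ⌊D⌋₊ + 60) u = mTail S (28 * ⌊D⌋₊ + 60) v)
    (hty : localContractingType S D (28 * ⌊D⌋₊ + 60) u
         = localContractingType S D (28 * ⌊D⌋₊ + 60) v) :
    cone S D u ⊆ cone S D v := by
  suffices H : ∀ N (w : List G), w.length = N → w ∈ cone S D u → w ∈ cone S D v by
    intro w hw
    exact H w.length w rfl hw
  intro N
  induction N using Nat.strong_induction_on with
  | _ N ih =>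
  intro w hwlen hw
  by_cases hsmall : w.length ≤ 28 * ⌊D⌋₊ + 60
  · have hmem : w ∈ localContractingType S D (28 * ⌊D⌋₊ + 60) u := ⟨hsmall, hw.1, hw.2⟩
    rw [hty] at hmem
    exact ⟨hw.1, hmem.2.2⟩
  push_neg at hsmall
  have hw0 : w ≠ [] := by
    intro h
    rw [h] at hsmall
    simp only [List.length_nil] at hsmall
    omega
  obtain ⟨w', c, hwc⟩ : ∃ w' c, w = w' ++ [c] :=
    ⟨w.dropLast, w.getLast hw0, (List.dropLast_append_getLast hw0).symm⟩
  subst hwc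
  have hlet := hw.1
  have hcu : IsContractingWord S D (u ++ (w' ++ [c])) := hw.2
  have hcu' : IsContractingWord S D ((u ++ w') ++ [c]) := by
    rwa [List.append_assoc]
  have hcw' : IsContractingWord S D (u ++ w') := isContractingWord_of_append hS hD hcu'
  have hw'letters : ∀ x ∈ w', IsLetter S x := fun x hx => hlet x (List.mem_append_left _ hx)
  have hcletter : IsLetter S c := hlet c (by simp)
  have hw'cone : w' ∈ cone S D u := ⟨hw'letters, hcw'⟩
  have hN : w'.length + 1 = N := by simpa using hwlen
  have hvw'cone : w' ∈ cone S D v := ih w'.length (by omega) w' rfl hw'cone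
  have hvw' : IsContractingWord S D (v ++ w') := hvw'cone.2
  have hnv1 : 1 ≤ v.length := List.length_pos_iff.2 hv0
  have hnw_big : 28 * ⌊D⌋₊ + 60 ≤ w'.length := by
    have : (w' ++ [c]).length = w'.length + 1 := by simp
    omega
  obtain ⟨hvwgeod, hvwN⟩ := (isContractingWord_iff hD _).1 hvw'
  obtain ⟨hcugeod, hcuN⟩ := (isContractingWord_iff hD _).1 hcu'
  have hlenvw : (v ++ w').length = v.length + w'.length := by simp
  have hlenuw : ((u ++ w') ++ [c]).length = u.length + w'.length + 1 := by
    simp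
    omega
  have hWlen : ((v ++ w') ++ [c]).length = v.length + w'.length + 1 := by
    simp
    omega
  have hWlet : ∀ x ∈ (v ++ w') ++ [c], IsLetter S x := by
    intro x hx
    rcases List.mem_append.1 hx with hx | hx
    · rcases List.mem_append.1 hx with hx | hx
      · exact hv.1 x hx
      · exact hw'letters x hx
    · simp only [List.mem_singleton] at hx
      subst hx
      exact hcletter
  -- STEP 1 : the extended word on the v side is geodesic
  have hstep1 : IsGeodesicWord S ((v ++ w') ++ [c]) := by
    refine ⟨hWlet, ?_⟩
    rw [hWlen]
    have hle : wordLength S (((v ++ w') ++ [c]).prod) ≤ v.length + w'.length + 1 := by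
      have := wordLength_prod_le hWlet
      omega
    by_contra hne
    have hlt : wordLength S (((v ++ w') ++ [c]).prod) ≤ v.length + w'.length := by omega
    set e := ((v ++ w') ++ [c]).prod with hedef
    have heprod : e = (v ++ w').prod * c := by
      rw [hedef, List.prod_append, List.prod_cons, List.prod_nil, mul_one]
    obtain ⟨z, hzlet, hzprod, hzlen⟩ := exists_geodesic_rep hS e
    have hzgeod : IsGeodesicWord S z := ⟨hzlet, by rw [hzprod, hzlen]⟩
    have hzlenle : z.length ≤ v.length + w'.length := by
      rw [hzlen]; exact hlt
    set P := segVerts (v ++ w') 0 (v.length + w'.length) with hPdef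
    have hP1 : (1 : G) ∈ P := by
      have := wVtx_mem_segVerts (w := v ++ w') (i := 0) (j := v.length + w'.length)
        (k := 0) le_rfl (Nat.zero_le _)
      simpa [wVtx_zero] using this
    have hPne : P.Nonempty := ⟨1, hP1⟩
    have hPcontr : ContrN S ⌊D⌋₊ P :=
      hvwN 0 (v.length + w'.length) (Nat.zero_le _) (by rw [hlenvw])
    have hdP0 : dP S P (wVtx z 0) = 0 := by
      have h1 : dP S P (wVtx z 0) ≤ wordDist S (wVtx z 0) 1 := dP_le _ hP1
      rw [wVtx_zero] at h1
      simpa [wVtx_zero] using h1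
    have hvtxn_eq : wVtx (v ++ w') (v.length + w'.length) = (v ++ w').prod := by
      rw [← hlenvw, wVtx_length]
    have hvtxn : wVtx (v ++ w') (v.length + w'.length) ∈ P :=
      wVtx_mem_segVerts (Nat.zero_le _) le_rfl
    have hLc : wordLength S c ≤ 1 := wordLength_letter_le hcletter
    have hdPend : dP S P (wVtx z z.length) ≤ 1 := by
      have h1 : dP S P (wVtx z z.length)
          ≤ wordDist S (wVtx z z.length) (wVtx (v ++ w') (v.length + w'.length)) :=
        dP_le _ hvtxn
      have h2 : wordDist S (wVtx z z.length) (wVtx (v ++ w') (v.length + w'.length))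
          = wordLength S c⁻¹ := by
        rw [wVtx_length, hzprod, hvtxn_eq, wordDist_def]
        congr 1
        rw [heprod]
        group
      rw [h2, wordLength_inv hS] at h1
      omega
    -- z is at least as long as n - 1
    have hvwL : wordLength S ((v ++ w').prod) = v.length + w'.length := by
      rw [hvwgeod.2, hlenvw]
    have hnle : v.length + w'.length ≤ z.length + 1 := by
      have hsplit : (v ++ w').prod = e * c⁻¹ := by rw [heprod]; group
      have h1 : wordLength S (e * c⁻¹) ≤ wordLength S e + wordLength S c⁻¹ :=
        wordLength_mul_le hS _ _
      rw [← hsplit, hvwL, wordLength_inv hS] at h1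
      omega
    have ht_le : v.length - 1 ≤ z.length := by omega
    have hmorse := morse_bound hS hPne hPcontr hzgeod hdP0 hdPend (v.length - 1) ht_le
    obtain ⟨pK, hpKP, hpKd⟩ := dP_exists (S := S) hPne (wVtx z (v.length - 1))
    have hdist_pK : wordDist S (wVtx z (v.length - 1)) pK ≤ 14 * ⌊D⌋₊ + 25 := by
      rw [hpKd]; exact hmorse
    obtain ⟨k, hk0, hkn, hpk_eq⟩ := hpKP
    have hpk_eq' : wVtx (v ++ w') k = pK := hpk_eq
    have hLz : wordLength S (wVtx z (v.length - 1)) = v.length - 1 :=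
      geodesic_prefix_len hS hzgeod ht_le
    have hLp : wordLength S pK = k := by
      rw [← hpk_eq']
      exact geodesic_prefix_len hS hvwgeod (by rw [hlenvw]; exact hkn)
    have hidx := le_wordDist_of_len hS (wVtx z (v.length - 1)) pK
    rw [hLz, hLp] at hidx
    -- hence k is close to v.length - 1
    have hvnv : wVtx (v ++ w') v.length = v.prod := by
      show ((v ++ w').take v.length).prod = v.prod
      rw [List.take_left]
    have hd_nv_k : wordDist S (wVtx (v ++ w') v.length) (wVtx (v ++ w') k)
        ≤ 14 * ⌊D⌋₊ + 26 := by
      rcases le_total v.length k with hcase | hcase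
      · have := geodesic_vtx_dist hS hvwgeod hcase (by rw [hlenvw]; exact hkn)
        omega
      · rw [wordDist_comm hS]
        have := geodesic_vtx_dist hS hvwgeod hcase (by rw [hlenvw]; omega)
        omega
    have hdh : wordDist S v.prod (wVtx z (v.length - 1)) ≤ 28 * ⌊D⌋₊ + 51 := by
      have t1 := wordDist_triangle hS v.prod pK (wVtx z (v.length - 1))
      have t2 : wordDist S pK (wVtx z (v.length - 1))
          = wordDist S (wVtx z (v.length - 1)) pK := wordDist_comm hS _ _
      rw [hvnv, hpk_eq'] at hd_nv_k
      omega
    -- the tail element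
    have hh_tail_v : v.prod⁻¹ * wVtx z (v.length - 1) ∈ mTail S (28 * ⌊D⌋₊ + 60) v := by
      constructor
      · show wordLength S (v.prod⁻¹ * wVtx z (v.length - 1)) ≤ 28 * ⌊D⌋₊ + 60
        have : wordLength S (v.prod⁻¹ * wVtx z (v.length - 1))
            = wordDist S v.prod (wVtx z (v.length - 1)) := rfl
        omega
      · show wordLength S (v.prod * (v.prod⁻¹ * wVtx z (v.length - 1)))
            < wordLength S v.prod
        have heq : v.prod * (v.prod⁻¹ * wVtx z (v.length - 1)) = wVtx z (v.length - 1) := by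
          group
        rw [heq, hLz, hv.2]
        omega
    rw [← ht] at hh_tail_v
    have hh_u : wordLength S (u.prod * (v.prod⁻¹ * wVtx z (v.length - 1)))
        < wordLength S u.prod := hh_tail_v.2
    rw [hu.2] at hh_u
    -- transfer the shortcut to the u side
    have heprod2 : e = v.prod * w'.prod * c := by
      rw [heprod, List.prod_append]
    have hsplit : u.prod * w'.prod * c
        = (u.prod * (v.prod⁻¹ * wVtx z (v.length - 1))) * ((wVtx z (v.length - 1))⁻¹ * e) := by
      rw [heprod2]
      group
    have hdz : wordLength S ((wVtx z (v.length - 1))⁻¹ * e) ≤ w'.length + 1 := by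
      have : wordLength S ((wVtx z (v.length - 1))⁻¹ * e)
          = wordDist S (wVtx z (v.length - 1)) (wVtx z z.length) := by
        rw [wVtx_length, hzprod]; rfl
      rw [this, geodesic_vtx_dist hS hzgeod ht_le le_rfl]
      omega
    have hfinal : wordLength S (u.prod * w'.prod * c) ≤ u.length + w'.length := by
      rw [hsplit]
      have := wordLength_mul_le hS (u.prod * (v.prod⁻¹ * wVtx z (v.length - 1)))
        ((wVtx z (v.length - 1))⁻¹ * e)
      omega
    have hugeod : wordLength S (((u ++ w') ++ [c]).prod) = u.length + w'.length + 1 := by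
      rw [hcugeod.2, hlenuw]
    have huprod : ((u ++ w') ++ [c]).prod = u.prod * w'.prod * c := by
      rw [List.prod_append, List.prod_append, List.prod_cons, List.prod_nil, mul_one]
    rw [huprod] at hugeod
    omega
  -- STEP 2 : contraction of all segments on the v side
  have htrans : ∀ i j, v.length ≤ i → i ≤ j → j ≤ v.length + w'.length + 1 →
      ContrN S ⌊D⌋₊ (segVerts ((v ++ w') ++ [c]) i j) := by
    intro i j hi hij hj
    have hseg_v : segVerts ((v ++ w') ++ [c]) i j
        = (v.prod * ·) '' segVerts (w' ++ [c]) (i - v.length) (j - v.length) := by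
      rw [List.append_assoc]
      exact segVerts_append_right hi (le_trans hi hij)
    have hcontr_u := hcuN (i - v.length + u.length) (j - v.length + u.length)
      (by omega) (by rw [hlenuw]; omega)
    have hseg_u : segVerts ((u ++ w') ++ [c]) (i - v.length + u.length)
          (j - v.length + u.length)
        = (u.prod * ·) '' segVerts (w' ++ [c]) (i - v.length) (j - v.length) := by
      rw [List.append_assoc]
      have hres := segVerts_append_right (v := u) (t := w' ++ [c])
        (i := i - v.length + u.length) (j := j - v.length + u.length)
        (by omega) (by omega)
      rw [hres]
      simp only [Nat.add_sub_cancel]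
    rw [hseg_u] at hcontr_u
    have htr := hcontr_u.translate (v.prod * u.prod⁻¹)
    have himg : ((v.prod * u.prod⁻¹) * ·) ''
          ((u.prod * ·) '' segVerts (w' ++ [c]) (i - v.length) (j - v.length))
        = (v.prod * ·) '' segVerts (w' ++ [c]) (i - v.length) (j - v.length) := by
      rw [Set.image_image]
      apply Set.image_congr'
      intro x
      group
    rw [himg] at htr
    rw [hseg_v]
    exact htr
  have hstep2 : ∀ i j, i ≤ j → j ≤ ((v ++ w') ++ [c]).length →
      ContrN S ⌊D⌋₊ (segVerts ((v ++ w') ++ [c]) i j) := by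
    intro i j hij hj
    rw [hWlen] at hj
    rcases le_or_gt j (v.length + w'.length) with hjn | hjn
    · have heq : segVerts ((v ++ w') ++ [c]) i j = segVerts (v ++ w') i j :=
        segVerts_append_left (by rw [hlenvw]; exact hjn)
      rw [heq]
      exact hvwN i j hij (by rw [hlenvw]; exact hjn)
    · have hj1 : j = v.length + w'.length + 1 := by omega
      subst hj1
      rcases le_or_gt v.length i with hi | hi
      · exact htrans i _ hi hij le_rfl
      · -- crossing segment
        have hA : ContrN S ⌊D⌋₊ (segVerts ((v ++ w') ++ [c]) i (v.length + w'.length)) := by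
          have heq : segVerts ((v ++ w') ++ [c]) i (v.length + w'.length)
              = segVerts (v ++ w') i (v.length + w'.length) :=
            segVerts_append_left (by rw [hlenvw])
          rw [heq]
          exact hvwN i _ (by omega) (by rw [hlenvw])
        have hC : ContrN S ⌊D⌋₊
            (segVerts ((v ++ w') ++ [c]) v.length (v.length + w'.length + 1)) :=
          htrans v.length _ le_rfl (by omega) le_rfl
        intro g₀ r hdisj p hp q hq
        obtain ⟨x, hx, hpx⟩ := Set.mem_iUnion₂.1 hp
        obtain ⟨y, hy, hqy⟩ := Set.mem_iUnion₂.1 hq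
        have hPAC : ∀ t, t ∈ segVerts ((v ++ w') ++ [c]) i (v.length + w'.length + 1) →
            t ∈ segVerts ((v ++ w') ++ [c]) i (v.length + w'.length) ∨
            t ∈ segVerts ((v ++ w') ++ [c]) v.length (v.length + w'.length + 1) := by
          rintro t ⟨k, hk1, hk2, rfl⟩
          rcases le_or_gt k (v.length + w'.length) with h | h
          · exact Or.inl ⟨k, hk1, h, rfl⟩
          · exact Or.inr ⟨k, by omega, hk2, rfl⟩
        have hAsub : segVerts ((v ++ w') ++ [c]) i (v.length + w'.length)
            ⊆ segVerts ((v ++ w') ++ [c]) i (v.length + w'.length + 1) :=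
          segVerts_mono le_rfl (by omega)
        have hCsub : segVerts ((v ++ w') ++ [c]) v.length (v.length + w'.length + 1)
            ⊆ segVerts ((v ++ w') ++ [c]) i (v.length + w'.length + 1) :=
          segVerts_mono (by omega) le_rfl
        by_cases hpA : p ∈ segVerts ((v ++ w') ++ [c]) i (v.length + w'.length)
        · by_cases hqA : q ∈ segVerts ((v ++ w') ++ [c]) i (v.length + w'.length)
          · exact hA g₀ r (hdisj.mono_right hAsub) p
              (mem_projSet hx (projPt_mono hAsub hpA hpx)) q
              (mem_projSet hy (projPt_mono hAsub hqA hqy))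
          · have hqC := (hPAC q hqy.1).resolve_left hqA
            by_cases hpC : p ∈ segVerts ((v ++ w') ++ [c]) v.length
                (v.length + w'.length + 1)
            · exact hC g₀ r (hdisj.mono_right hCsub) p
                (mem_projSet hx (projPt_mono hCsub hpC hpx)) q
                (mem_projSet hy (projPt_mono hCsub hqC hqy))
            · exact (cross_impossible hS hstep1 hi le_self_add hWlen (by omega) hA hdisj
                hx hy hpx hqy hpA hpC hqC hqA).elim
        · have hpC := (hPAC p hpx.1).resolve_left hpA
          by_cases hqC : q ∈ segVerts ((v ++ w') ++ [c]) v.length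
              (v.length + w'.length + 1)
          · exact hC g₀ r (hdisj.mono_right hCsub) p
              (mem_projSet hx (projPt_mono hCsub hpC hpx)) q
              (mem_projSet hy (projPt_mono hCsub hqC hqy))
          · have hqA := (hPAC q hqy.1).resolve_right hqC
            exact (cross_impossible hS hstep1 hi le_self_add hWlen (by omega) hA hdisj
              hy hx hqy hpx hqA hqC hpC hpA).elim
  have hcontrW : IsContractingWord S D ((v ++ w') ++ [c]) :=
    (isContractingWord_iff hD _).2 ⟨hstep1, hstep2⟩
  exact ⟨hlet, by rwa [List.append_assoc] at hcontrW⟩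

end MainLemma

/-- there is an `m` such that any two geodesic words with the same
`m`-tail and the same `m`-local contracting type have the same `D`-contracting
cone. -/
theorem cone_types_determined_locally {G : Type} [Group G] (S : Finset G)
    (hS : Subgroup.closure (S : Set G) = ⊤) (D : ℝ) (hD : 0 ≤ D) :
    ∃ m : ℕ, ∀ u v : List G, IsGeodesicWord S u → IsGeodesicWord S v →
      mTail S m u = mTail S m v →
      localContractingType S D m u = localContractingType S D m v →
      cone S D u = cone S D v := by
  refine ⟨28 * ⌊D⌋₊ + 60, fun u v hu hv ht hty => ?_⟩
  by_cases hu0 : u = []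
  · subst hu0
    have hv0 : v = [] := by
      by_contra hv0
      obtain ⟨h, hmem⟩ := mTail_nonempty hS hv hv0 (by omega : 1 ≤ 28 * ⌊D⌋₊ + 60)
      rw [← ht, mTail_nil] at hmem
      exact absurd hmem (by simp)
    subst hv0
    rfl
  · by_cases hv0 : v = []
    · subst hv0
      obtain ⟨h, hmem⟩ := mTail_nonempty hS hu hu0 (by omega : 1 ≤ 28 * ⌊D⌋₊ + 60)
      rw [ht, mTail_nil] at hmem
      exact absurd hmem (by simp)
    · exact Set.Subset.antisymm (cone_subset hS hD hu hv hu0 hv0 ht hty)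
        (cone_subset hS hD hv hu hv0 hu0 ht.symm hty.symm)
end

section
/- Let Σ be a finite alphabet and let L be a regular language over Σ. For each n ∈ ℕ let a_n denote the number of words of length n in L. Then the sequence (a_n) satisfies a linear recursion: there exist k ≥ 1 and integers c₁, …, c_k such that a_{n+k} = c₁·a_{n+k−1} + c₂·a_{n+k−2} + ⋯ + c_k·a_n for all n ∈ ℕ. -/
open Polynomial Matrix Finset

namespace RegCountAux

variable {A : Type} [Fintype A] {σ : Type} [Fintype σ]

open Classical in
/-- transfer matrix of a DFA -/
noncomputable def trans (M : DFA A σ) : Matrix σ σ ℤ :=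
  fun s t => (Fintype.card {x : A // M.step s x = t} : ℤ)

open Classical in
lemma pow_entry (M : DFA A σ) : ∀ (n : ℕ) (s t : σ),
    ((trans M ^ n) s t) =
      (Nat.card {w : List.Vector A n // M.evalFrom s w.toList = t} : ℤ) := by
  intro n
  induction n with
  | zero =>
    intro s t
    by_cases h : s = t
    · subst h
      have : Unique {w : List.Vector A 0 // M.evalFrom s w.toList = s} :=
        ⟨⟨⟨List.Vector.nil, by simp [DFA.evalFrom]⟩⟩,
          fun w => Subtype.ext (List.Vector.eq_nil _)⟩
      simp [Matrix.one_apply_eq, Nat.card_unique]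
    · have : IsEmpty {w : List.Vector A 0 // M.evalFrom s w.toList = t} := by
        refine ⟨fun w => h ?_⟩
        have hw := w.2
        rw [List.Vector.eq_nil w.1] at hw
        simpa [DFA.evalFrom] using hw
      rw [pow_zero, Matrix.one_apply_ne h, Nat.card_of_isEmpty, Nat.cast_zero]
  | succ n ih =>
    intro s t
    have e : {w : List.Vector A (n + 1) // M.evalFrom s w.toList = t} ≃
        Σ x : A, {w : List.Vector A n // M.evalFrom (M.step s x) w.toList = t} := by
      refine ⟨fun w => ⟨w.1.head, ⟨w.1.tail, ?_⟩⟩,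
              fun p => ⟨p.1 ::ᵥ p.2.1, ?_⟩, ?_, ?_⟩
      · have hw := w.2
        rw [← List.Vector.cons_head_tail w.1, List.Vector.toList_cons] at hw
        simpa [DFA.evalFrom] using hw
      · have := p.2.2
        simp only [List.Vector.toList_cons]
        simpa [DFA.evalFrom] using this
      · rintro ⟨w, hw⟩
        apply Subtype.ext
        simp [List.Vector.cons_head_tail]
      · rintro ⟨x, w, hw⟩
        simp [List.Vector.head_cons, List.Vector.tail_cons]
        exact HEq.rfl
    rw [pow_succ']
    have hm : (trans M * trans M ^ n) s t = ∑ u : σ, trans M s u * (trans M ^ n) u t :=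
      Matrix.mul_apply
    rw [hm]
    rw [Nat.card_congr e, Nat.card_eq_fintype_card, Fintype.card_sigma]
    push_cast
    have key : ∀ u : σ, trans M s u * (trans M ^ n) u t =
        ∑ x ∈ univ.filter (fun x => M.step s x = u),
          ((Nat.card {w : List.Vector A n // M.evalFrom (M.step s x) w.toList = t} : ℤ)) := by
      intro u
      rw [ih u t]
      rw [Finset.sum_congr rfl (fun x hx => by
        rw [(Finset.mem_filter.mp hx).2])]
      rw [Finset.sum_const, nsmul_eq_mul]
      congr 1
      simp [trans, Fintype.card_subtype]
    rw [Finset.sum_congr rfl (fun u _ => key u)]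
    rw [Finset.sum_fiberwise univ (fun x => M.step s x)
      (fun x => ((Nat.card {w : List.Vector A n //
        M.evalFrom (M.step s x) w.toList = t} : ℕ) : ℤ))]
    refine Finset.sum_congr rfl (fun x _ => ?_)
    rw [Nat.card_eq_fintype_card]

end RegCountAux

/-- for a regular language `L` over a finite alphabet `A`, the
sequence counting the words of each length in `L` satisfies a linear recursion
with integer coefficients. -/
theorem regular_language_count_linear_recursion {A : Type} [Fintype A]
    (L : Language A) (hL : L.IsRegular)
    (a : ℕ → ℕ) (ha : ∀ n, a n = Set.ncard {w : List A | w ∈ L ∧ w.length = n}) :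
    ∃ k : ℕ, 1 ≤ k ∧ ∃ c : Fin k → ℤ,
      ∀ n : ℕ, (a (n + k) : ℤ) = ∑ i : Fin k, c i * (a (n + k - 1 - (i : ℕ)) : ℤ) := by
  classical
  obtain ⟨σ, hσ, M, hM⟩ := hL
  set T := RegCountAux.trans M with hT
  -- the accept indicator vector
  set v : σ → ℤ := fun t => if t ∈ M.accept then 1 else 0 with hv
  -- counting formula
  have count_eq : ∀ n : ℕ, (a n : ℤ) = ∑ t : σ, (T ^ n) M.start t * v t := by
    intro n
    have e1 : {w : List A | w ∈ L ∧ w.length = n} ≃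
        {w : List.Vector A n // M.evalFrom M.start w.toList ∈ M.accept} := by
      refine ⟨fun w => ⟨⟨w.1, w.2.2⟩, ?_⟩, fun w => ⟨w.1.1, ?_, w.1.2⟩, ?_, ?_⟩
      · have h1 : (w : List A) ∈ M.accepts := by rw [hM]; exact w.2.1
        exact M.mem_accepts.mp h1
      · rw [← hM]
        exact M.mem_accepts.mpr w.2
      · rintro ⟨w, hw⟩; rfl
      · rintro ⟨⟨w, hw⟩, h⟩; rfl
    have h1 : a n = Nat.card {w : List.Vector A n //
        M.evalFrom M.start w.toList ∈ M.accept} := by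
      rw [ha n, ← Nat.card_coe_set_eq, Nat.card_congr e1]
    have h2 : ∑ t : σ, (T ^ n) M.start t * v t =
        ∑ t ∈ univ.filter (· ∈ M.accept), (T ^ n) M.start t := by
      rw [Finset.sum_filter]
      refine Finset.sum_congr rfl (fun t _ => ?_)
      by_cases h : t ∈ M.accept <;> simp [hv, h]
    rw [h1, h2]
    have h3 : ∀ t : σ, (T ^ n) M.start t =
        ((univ.filter (fun w : List.Vector A n =>
          M.evalFrom M.start w.toList = t)).card : ℤ) := by
      intro t
      rw [RegCountAux.pow_entry M n M.start t, Nat.card_eq_fintype_card,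
        Fintype.card_subtype]
    rw [show ∑ t ∈ univ.filter (· ∈ M.accept), (T ^ n) M.start t =
      ∑ t ∈ univ.filter (· ∈ M.accept), ((univ.filter (fun w : List.Vector A n =>
        M.evalFrom M.start w.toList = t)).card : ℤ)
      from Finset.sum_congr rfl (fun t _ => h3 t)]
    rw [Nat.card_eq_fintype_card, Fintype.card_subtype]
    have hnat : (univ.filter (fun w : List.Vector A n =>
        M.evalFrom M.start w.toList ∈ M.accept)).card =
        ∑ t ∈ univ.filter (· ∈ M.accept),
          (univ.filter (fun w : List.Vector A n =>
            M.evalFrom M.start w.toList = t)).card := by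
      have hmaps : ∀ w ∈ univ.filter (fun w : List.Vector A n =>
          M.evalFrom M.start w.toList ∈ M.accept),
          M.evalFrom M.start w.toList ∈ univ.filter (· ∈ M.accept) := by
        intro w hw
        simpa using (Finset.mem_filter.mp hw).2
      rw [Finset.card_eq_sum_card_fiberwise hmaps]
      refine Finset.sum_congr rfl (fun t ht => ?_)
      congr 1
      ext w
      simp only [Finset.mem_filter, Finset.mem_univ, true_and]
      constructor
      · rintro ⟨_, h⟩; exact h
      · intro h; exact ⟨by rw [h]; exact (Finset.mem_filter.mp ht).2, h⟩
    rw [hnat]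
    push_cast
    rfl
  -- Cayley–Hamilton
  set K : ℕ := Fintype.card σ + 1 with hK
  set q : ℤ[X] := X * T.charpoly with hq
  have hq_monic : q.Monic := (monic_X).mul T.charpoly_monic
  have hq_deg : q.natDegree = K := by
    rw [hq, (monic_X).natDegree_mul T.charpoly_monic, natDegree_X,
      T.charpoly_natDegree_eq_dim, hK, add_comm]
  set r : ℤ[X] := X ^ K - q with hr
  have hr_deg : r.natDegree < K := by
    by_cases h0 : r = 0
    · rw [h0]; simp [hK]
    · rw [Polynomial.natDegree_lt_iff_degree_lt h0]
      have hd : (X ^ K - q : ℤ[X]).degree < (X ^ K : ℤ[X]).degree := by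
        refine Polynomial.degree_sub_lt ?_ (pow_ne_zero _ Polynomial.X_ne_zero) ?_
        · rw [degree_X_pow, Polynomial.degree_eq_natDegree hq_monic.ne_zero, hq_deg]
        · rw [leadingCoeff_X_pow, hq_monic.leadingCoeff]
      rw [← hr] at hd
      calc r.degree < (X ^ K : ℤ[X]).degree := hd
        _ = (K : WithBot ℕ) := degree_X_pow K
  have haeval : Polynomial.aeval T r = T ^ K := by
    rw [hr, map_sub, map_pow, aeval_X, hq, _root_.map_mul, aeval_X,
      Matrix.aeval_self_charpoly, mul_zero, sub_zero]
  have hTK : T ^ K = ∑ j ∈ Finset.range K, r.coeff j • T ^ j := by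
    rw [← haeval, Polynomial.aeval_eq_sum_range' hr_deg]
  refine ⟨K, by omega, fun i => r.coeff (K - 1 - (i : ℕ)), fun n => ?_⟩
  have hpow : T ^ (n + K) = ∑ j ∈ Finset.range K, r.coeff j • T ^ (n + j) := by
    rw [pow_add, hTK, Finset.mul_sum]
    refine Finset.sum_congr rfl (fun j _ => ?_)
    rw [mul_smul_comm, pow_add]
  rw [count_eq (n + K), hpow]
  have swap : ∑ t : σ, (∑ j ∈ Finset.range K, r.coeff j • T ^ (n + j)) M.start t * v t
      = ∑ j ∈ Finset.range K, r.coeff j * ∑ t : σ, (T ^ (n + j)) M.start t * v t := by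
    calc ∑ t : σ, (∑ j ∈ Finset.range K, r.coeff j • T ^ (n + j)) M.start t * v t
        = ∑ t : σ, ∑ j ∈ Finset.range K, r.coeff j * ((T ^ (n + j)) M.start t * v t) := by
          refine Finset.sum_congr rfl fun t _ => ?_
          rw [Matrix.sum_apply, Finset.sum_mul]
          refine Finset.sum_congr rfl fun j _ => ?_
          rw [Matrix.smul_apply, smul_eq_mul, mul_assoc]
      _ = ∑ j ∈ Finset.range K, ∑ t : σ, r.coeff j * ((T ^ (n + j)) M.start t * v t) :=
          Finset.sum_comm
      _ = ∑ j ∈ Finset.range K, r.coeff j * ∑ t : σ, (T ^ (n + j)) M.start t * v t := by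
          refine Finset.sum_congr rfl fun j _ => ?_
          rw [Finset.mul_sum]
  rw [swap]
  -- reindex j ↦ K - 1 - j and identify with Fin K sum
  have hre : ∑ j ∈ Finset.range K, r.coeff j * ∑ t : σ, (T ^ (n + j)) M.start t * v t
      = ∑ i : Fin K, r.coeff (K - 1 - (i : ℕ)) *
          ∑ t : σ, (T ^ (n + (K - 1 - (i : ℕ)))) M.start t * v t := by
    rw [Fin.sum_univ_eq_sum_range
      (fun i => r.coeff (K - 1 - i) * ∑ t : σ, (T ^ (n + (K - 1 - i))) M.start t * v t) K]
    exact (Finset.sum_range_reflect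
      (fun j => r.coeff j * ∑ t : σ, (T ^ (n + j)) M.start t * v t) K).symm
  rw [hre]
  refine Finset.sum_congr rfl (fun i _ => ?_)
  have hi : (i : ℕ) < K := i.2
  have harith : n + (K - 1 - (i : ℕ)) = n + K - 1 - (i : ℕ) := by omega
  rw [harith, ← count_eq (n + K - 1 - (i : ℕ))]
end
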